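/- arXiv:0902.4416 — 3 statements merged into one kernel-verified Lean document; each statement's English description precedes it below -/
import Mathlib

section
/- Let â : E₁ → E₂ be a closed surjective linear operator between Banach spaces, and let k(â) := ‖ã⁻¹‖ be the norm of the bounded inverse of the induced map on E₁/ker â. Then the set-valued inverse â⁻¹ : E₂ → (subsets of E₁), y ↦ {x ∈ D(â) : â x = y}, is Lipschitz with constant k(â) with respect to the Hausdorff distance: for all y₁, y₂ ∈ E₂, d_H(â⁻¹(y₁), â⁻¹(y₂)) ≤ k(â)·‖y₁ − y₂‖. -/
/-- For a closed surjective linear operator `â` between Banach spaces with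
`k(â) = sup_{‖y‖=1} inf {‖x‖ : â x = y}`, the set-valued inverse `y ↦ {x ∈ D(â) : â x = y}`
is Lipschitz with constant `k(â)` for the Hausdorff distance. -/
theorem setValued_inverse_lipschitz_hausdorff
    {E₁ E₂ : Type*} [NormedAddCommGroup E₁] [NormedSpace ℝ E₁] [CompleteSpace E₁]
    [NormedAddCommGroup E₂] [NormedSpace ℝ E₂] [CompleteSpace E₂]
    (a : E₁ →ₗ.[ℝ] E₂)
    (hclosed : IsClosed (a.graph : Set (E₁ × E₂)))
    (hsurj : ∀ y : E₂, ∃ x : a.domain, a x = y)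
    (k : ℝ)
    (hk : k = sSup {r : ℝ | ∃ y : E₂, ‖y‖ = 1 ∧
      r = sInf {t : ℝ | ∃ x : a.domain, a x = y ∧ ‖(x : E₁)‖ = t}}) :
    ∀ y₁ y₂ : E₂,
      Metric.hausdorffDist
        {x : E₁ | ∃ hx : x ∈ a.domain, a ⟨x, hx⟩ = y₁}
        {x : E₁ | ∃ hx : x ∈ a.domain, a ⟨x, hx⟩ = y₂} ≤ k * ‖y₁ - y₂‖ := by
  -- Notation for the fiber-norm sets
  set S : E₂ → Set ℝ :=
    fun y => {t : ℝ | ∃ x : a.domain, a x = y ∧ ‖(x : E₁)‖ = t} with hS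
  set K : Set ℝ := {r : ℝ | ∃ y : E₂, ‖y‖ = 1 ∧ r = sInf (S y)} with hKdef
  have hSne : ∀ y : E₂, (S y).Nonempty := by
    intro y
    obtain ⟨x, hx⟩ := hsurj y
    exact ⟨‖(x : E₁)‖, x, hx, rfl⟩
  have hSbdd : ∀ y : E₂, BddBelow (S y) := by
    intro y
    refine ⟨0, ?_⟩
    rintro t ⟨x, -, rfl⟩
    exact norm_nonneg _
  have hSpos : ∀ y : E₂, 0 ≤ sInf (S y) := by
    intro y
    refine le_csInf (hSne y) ?_
    rintro t ⟨x, -, rfl⟩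
    exact norm_nonneg _
  -- Open mapping theorem on the graph
  haveI : CompleteSpace a.graph := hclosed.completeSpace_coe
  set π : a.graph →L[ℝ] E₂ :=
    (ContinuousLinearMap.snd ℝ E₁ E₂).comp a.graph.subtypeL with hπ
  have hπsurj : Function.Surjective π := by
    intro y
    obtain ⟨x, hx⟩ := hsurj y
    exact ⟨⟨(↑x, a x), a.mem_graph x⟩, by simpa [hπ] using hx⟩
  obtain ⟨C, hC0, hC⟩ := π.exists_preimage_norm_le hπsurj
  have hbound : ∀ y : E₂, sInf (S y) ≤ C * ‖y‖ := by
    intro y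
    obtain ⟨g, hg, hgn⟩ := hC y
    obtain ⟨x, hx1, hx2⟩ := (a.mem_graph_iff (x := (g : E₁ × E₂))).mp g.2
    have hπg : (g : E₁ × E₂).2 = y := hg
    have hmem : ‖(x : E₁)‖ ∈ S y := ⟨x, by rw [hx2, hπg], rfl⟩
    have : ‖(x : E₁)‖ ≤ C * ‖y‖ := by
      rw [hx1]
      calc ‖(g : E₁ × E₂).1‖ ≤ ‖(g : E₁ × E₂)‖ := norm_fst_le _
        _ = ‖g‖ := rfl
        _ ≤ C * ‖y‖ := hgn
    exact (csInf_le (hSbdd y) hmem).trans this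
  have hKbdd : BddAbove K := by
    refine ⟨C, ?_⟩
    rintro r ⟨y, hy1, rfl⟩
    have := hbound y
    rwa [hy1, mul_one] at this
  have hk0 : 0 ≤ k := by
    rcases K.eq_empty_or_nonempty with hKe | ⟨r, hr⟩
    · rw [hk, hKe, Real.sSup_empty]
    · obtain ⟨y, hy1, hry⟩ := hr
      have h0r : 0 ≤ r := hry ▸ hSpos y
      exact h0r.trans (hk ▸ le_csSup hKbdd ⟨y, hy1, hry⟩)
  -- The key estimate: the minimal norm in the fiber of `y` is at most `k * ‖y‖`.
  have hkey : ∀ y : E₂, sInf (S y) ≤ k * ‖y‖ := by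
    intro y
    rcases eq_or_ne y 0 with rfl | hy0
    · have h0 : (0 : ℝ) ∈ S 0 := ⟨0, a.map_zero, by simp⟩
      have := csInf_le (hSbdd 0) h0
      simpa using this
    · have hc : (0 : ℝ) < ‖y‖ := norm_pos_iff.mpr hy0
      set c : ℝ := ‖y‖ with hcdef
      set u : E₂ := c⁻¹ • y with hu
      have hu1 : ‖u‖ = 1 := by
        rw [hu, norm_smul, norm_inv, Real.norm_eq_abs, abs_of_pos hc, inv_mul_cancel₀ hc.ne']
      have hinfu : sInf (S u) ≤ k := hk ▸ le_csSup hKbdd ⟨u, hu1, rfl⟩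
      refine le_of_forall_pos_le_add ?_
      intro ε hε
      obtain ⟨t, ⟨x, hax, rfl⟩, ht⟩ := Real.lt_sInf_add_pos (hSne u) (div_pos hε hc)
      have hcx : a (c • x) = y := by
        rw [a.map_smul, hax, hu, smul_smul, mul_inv_cancel₀ hc.ne', one_smul]
      have hmem : ‖((c • x : a.domain) : E₁)‖ ∈ S y := ⟨c • x, hcx, rfl⟩
      have hnorm : ‖((c • x : a.domain) : E₁)‖ = c * ‖(x : E₁)‖ := by
        have : ((c • x : a.domain) : E₁) = c • (x : E₁) := rfl
        rw [this, norm_smul, Real.norm_eq_abs, abs_of_pos hc]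
      calc sInf (S y) ≤ ‖((c • x : a.domain) : E₁)‖ := csInf_le (hSbdd y) hmem
        _ = c * ‖(x : E₁)‖ := hnorm
        _ ≤ c * (sInf (S u) + ε / c) := by
            exact mul_le_mul_of_nonneg_left ht.le hc.le
        _ = c * sInf (S u) + ε := by
            rw [mul_add, mul_div_cancel₀ _ hc.ne']
        _ ≤ c * k + ε := by
            exact add_le_add (mul_le_mul_of_nonneg_left hinfu hc.le) le_rfl
        _ = k * c + ε := by ring
  -- Distance from a point in one fiber to the other fiber.
  have hfib : ∀ z₁ z₂ : E₂, ∀ x ∈ {x : E₁ | ∃ hx : x ∈ a.domain, a ⟨x, hx⟩ = z₁},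
      Metric.infDist x {x : E₁ | ∃ hx : x ∈ a.domain, a ⟨x, hx⟩ = z₂} ≤ k * ‖z₁ - z₂‖ := by
    rintro z₁ z₂ x ⟨hx, hax⟩
    have h1 : Metric.infDist x {x : E₁ | ∃ hx : x ∈ a.domain, a ⟨x, hx⟩ = z₂}
        ≤ sInf (S (z₂ - z₁)) := by
      refine le_csInf (hSne _) ?_
      rintro t ⟨u, hau, rfl⟩
      have hmemd : x + (u : E₁) ∈ a.domain := a.domain.add_mem hx u.2
      have heq : (⟨x + (u : E₁), hmemd⟩ : a.domain) = ⟨x, hx⟩ + u := rfl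
      have hmem : x + (u : E₁) ∈ {x : E₁ | ∃ hx : x ∈ a.domain, a ⟨x, hx⟩ = z₂} := by
        refine ⟨hmemd, ?_⟩
        rw [heq, a.map_add, hax, hau]
        abel
      have := Metric.infDist_le_dist_of_mem (x := x) hmem
      rwa [dist_self_add_right] at this
    have h2 := hkey (z₂ - z₁)
    rw [norm_sub_rev] at h2
    exact h1.trans h2
  intro y₁ y₂
  refine Metric.hausdorffDist_le_of_infDist
    (mul_nonneg hk0 (norm_nonneg _)) (hfib y₁ y₂) ?_
  intro x hx
  have := hfib y₂ y₁ x hx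
  rwa [norm_sub_rev] at this
end

section
/- Under the hypotheses of the main construction, the map φ_r^{(ε)}(y,t) = (t/(t²+ε²))·f_r(t·s(y) + t²·c̄) is compact on E₂ ⊕ ℝ for every ε ≠ 0: it is continuous and maps every bounded subset of E₂ ⊕ ℝ to a relatively compact subset of E₂. -/
open scoped Classical
open Bornology Metric Filter

/-- Auxiliary: a set every point of which is within `η` of a totally bounded set,
for every `η > 0`, is totally bounded. -/
lemma totallyBounded_of_near {X : Type*} [PseudoMetricSpace X] {S : Set X}
    (h : ∀ η > (0:ℝ), ∃ T : Set X, TotallyBounded T ∧ ∀ x ∈ S, ∃ y ∈ T, dist x y ≤ η) :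
    TotallyBounded S := by
  rw [Metric.totallyBounded_iff]
  intro d hd
  obtain ⟨T, hT, hST⟩ := h (d/3) (by linarith)
  obtain ⟨t, htfin, htT⟩ := Metric.totallyBounded_iff.mp hT (d/3) (by linarith)
  refine ⟨t, htfin, fun x hx => ?_⟩
  obtain ⟨y, hyT, hxy⟩ := hST x hx
  obtain ⟨z, hz, hyz⟩ := Set.mem_iUnion₂.mp (htT hyT)
  exact Set.mem_iUnion₂.mpr ⟨z, hz, mem_ball.mpr
    (lt_of_le_of_lt (dist_triangle x y z) (by have := mem_ball.mp hyz; linarith))⟩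

set_option maxHeartbeats 1000000 in
/-- Under the main construction's hypotheses (`f` an `â`-compact map on
`S_r(0) ∩ D(â)` with `sup_{S_r(0)} ‖f‖/r = k_f⁻¹ < ∞`, `f_r` its radial extension,
`s` a continuous odd section of `â` with `‖s y‖ ≤ k_s ‖y‖`, `c̄ ∈ ker â`), the map
`φ_r^{(ε)}(y,t) = (t/(t²+ε²)) • f_r (t • s y + t² • c̄)` is compact on `E₂ ⊕ ℝ` for every
`ε ≠ 0`: it is continuous and maps bounded sets to relatively compact sets. -/
theorem phi_eps_compact
    {E₁ E₂ : Type*} [NormedAddCommGroup E₁] [NormedSpace ℝ E₁] [CompleteSpace E₁]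
    [NormedAddCommGroup E₂] [NormedSpace ℝ E₂] [CompleteSpace E₂]
    (a : E₁ →ₗ.[ℝ] E₂)
    (hclosed : IsClosed (a.graph : Set (E₁ × E₂)))
    (hsurj : ∀ y : E₂, ∃ x : a.domain, a x = y)
    (r ε kfinv ks : ℝ) (hr : 0 < r) (hε : ε ≠ 0)
    (f : E₁ → E₂)
    (hfc : ContinuousOn f (sphere (0 : E₁) r ∩ a.domain))
    (hbound : ∀ x ∈ sphere (0 : E₁) r, ‖f x‖ / r ≤ kfinv)
    (hfcomp : ∀ (A₁ : Set E₁) (A₂ : Set E₂), IsBounded A₁ → IsBounded A₂ →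
      A₁ ⊆ sphere (0 : E₁) r ∩ a.domain →
      IsCompact (closure (f '' (A₁ ∩ {x : E₁ | ∃ y ∈ A₂, (x, y) ∈ a.graph}))))
    (fr : E₁ → E₂)
    (hfr : ∀ x : E₁, fr x = if x = 0 then 0 else (‖x‖ / r) • f ((r / ‖x‖) • x))
    (s : E₂ → E₁) (hscont : Continuous s)
    (hsodd : ∀ y : E₂, s (-y) = - s y)
    (hsec : ∀ y : E₂, (s y, y) ∈ a.graph)
    (hsb : ∀ y : E₂, ‖s y‖ ≤ ks * ‖y‖)
    (c : E₁) (hc : (c, (0 : E₂)) ∈ a.graph)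
    (φ : E₂ × ℝ → E₂)
    (hφ : ∀ p : E₂ × ℝ, φ p = (p.2 / (p.2 ^ 2 + ε ^ 2)) • fr (p.2 • s p.1 + p.2 ^ 2 • c)) :
    Continuous φ ∧
    ∀ A : Set (E₂ × ℝ), IsBounded A → IsCompact (closure (φ '' A)) := by
  -- notation
  set u : E₂ × ℝ → E₁ := fun p => s p.1 + p.2 • c with hu_def
  set g : E₂ × ℝ → E₁ := fun p => p.2 • u p with hg_def
  have hεpos : ∀ t : ℝ, 0 < t ^ 2 + ε ^ 2 := fun t => by positivity
  have hgeq : ∀ p : E₂ × ℝ, p.2 • s p.1 + p.2 ^ 2 • c = g p := by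
    intro p
    simp only [hg_def, hu_def, smul_add, smul_smul, sq]
  have hφ' : ∀ p : E₂ × ℝ, φ p = (p.2 / (p.2 ^ 2 + ε ^ 2)) • fr (g p) := by
    intro p; rw [hφ p, hgeq p]
  -- graph facts
  have hugraph : ∀ p : E₂ × ℝ, (u p, p.1) ∈ a.graph := by
    intro p
    have h1 := a.graph.add_mem (hsec p.1) (a.graph.smul_mem p.2 hc)
    simpa using h1
  have hggraph : ∀ p : E₂ × ℝ, (g p, p.2 • p.1) ∈ a.graph := by
    intro p
    have h1 := a.graph.smul_mem p.2 (hugraph p)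
    simpa [hg_def] using h1
  have hgdom : ∀ p : E₂ × ℝ, g p ∈ a.domain :=
    fun p => LinearPMap.mem_domain_of_mem_graph (hggraph p)
  -- norm of g
  have hgn : ∀ p : E₂ × ℝ, ‖g p‖ = |p.2| * ‖u p‖ := by
    intro p; rw [hg_def]; simp [norm_smul, Real.norm_eq_abs]
  -- the bound on fr
  set Kf := |kfinv| with hKf_def
  have hKf0 : 0 ≤ Kf := abs_nonneg _
  have hfr0 : fr 0 = 0 := by rw [hfr]; simp
  have hsph : ∀ x : E₁, x ≠ 0 → (r / ‖x‖) • x ∈ sphere (0 : E₁) r := by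
    intro x hx
    have hxn : (0:ℝ) < ‖x‖ := norm_pos_iff.mpr hx
    rw [mem_sphere_zero_iff_norm, norm_smul, Real.norm_eq_abs,
      abs_of_nonneg (by positivity)]
    field_simp
  have hfrb : ∀ x : E₁, ‖fr x‖ ≤ Kf * ‖x‖ := by
    intro x
    by_cases hx : x = 0
    · simp [hx, hfr0]
    · rw [hfr, if_neg hx]
      have hxn : (0:ℝ) < ‖x‖ := norm_pos_iff.mpr hx
      have hb := hbound _ (hsph x hx)
      have hk0 : 0 ≤ kfinv := le_trans (by positivity) hb
      have hb' : ‖f ((r / ‖x‖) • x)‖ ≤ kfinv * r := by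
        rw [div_le_iff₀ hr] at hb; linarith
      rw [norm_smul, Real.norm_eq_abs, abs_of_nonneg (by positivity)]
      have : ‖x‖ / r * ‖f ((r / ‖x‖) • x)‖ ≤ ‖x‖ / r * (kfinv * r) := by
        apply mul_le_mul_of_nonneg_left hb' (by positivity)
      calc ‖x‖ / r * ‖f ((r / ‖x‖) • x)‖ ≤ ‖x‖ / r * (kfinv * r) := this
        _ = kfinv * ‖x‖ := by field_simp
        _ = Kf * ‖x‖ := by rw [hKf_def, abs_of_nonneg hk0]
  -- odd map sends 0 to 0
  have hs0 : s 0 = 0 := by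
    have h1 := hsodd 0
    rw [neg_zero] at h1
    have h2 : (2:ℝ) • s 0 = 0 := by
      rw [two_smul]
      nth_rewrite 2 [h1]
      simp
    rcases smul_eq_zero.mp h2 with h | h
    · norm_num at h
    · exact h
  set Ks := |ks| with hKs_def
  have hsb' : ∀ y : E₂, ‖s y‖ ≤ Ks * ‖y‖ := by
    intro y
    by_cases hy : y = 0
    · simp [hy, hs0]
    · have hyn : (0:ℝ) < ‖y‖ := norm_pos_iff.mpr hy
      have h1 := hsb y
      have hks0 : 0 ≤ ks := by nlinarith [norm_nonneg (s y)]
      rw [hKs_def, abs_of_nonneg hks0]; exact h1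
  -- continuity of g
  have hgcont : Continuous g := by
    rw [hg_def, hu_def]
    exact continuous_snd.smul ((hscont.comp continuous_fst).add
      (continuous_snd.smul continuous_const))
  -- continuity of fr ∘ g
  have hFcont : Continuous fun p : E₂ × ℝ => fr (g p) := by
    rw [continuous_iff_continuousAt]
    intro p
    by_cases hp : g p = 0
    · have hfp : fr (g p) = 0 := by rw [hp, hfr0]
      have hT : Tendsto (fun q : E₂ × ℝ => fr (g q)) (nhds p) (nhds 0) := by
        apply squeeze_zero_norm (fun q => hfrb (g q))
        have h1 : Tendsto (fun q : E₂ × ℝ => Kf * ‖g q‖) (nhds p) (nhds (Kf * ‖g p‖)) :=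
          (continuous_const.mul hgcont.norm).tendsto p
        rwa [hp, norm_zero, mul_zero] at h1
      show Tendsto (fun q : E₂ × ℝ => fr (g q)) (nhds p) (nhds (fr (g p)))
      rwa [hfp]
    · have hU : ∀ᶠ q in nhds p, g q ≠ 0 := hgcont.continuousAt.eventually_ne hp
      set h : E₂ × ℝ → E₁ := fun q => (r / ‖g q‖) • g q with hh_def
      have hmem : ∀ q : E₂ × ℝ, g q ≠ 0 → h q ∈ sphere (0 : E₁) r ∩ a.domain := by
        intro q hq
        exact ⟨hsph _ hq, a.domain.smul_mem _ (hgdom q)⟩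
      have hhc : ContinuousAt h p := by
        apply ContinuousAt.smul
        · exact ContinuousAt.div continuousAt_const hgcont.norm.continuousAt
            (norm_ne_zero_iff.mpr hp)
        · exact hgcont.continuousAt
      have htd : Tendsto h (nhds p) (nhdsWithin (h p) (sphere (0 : E₁) r ∩ a.domain)) := by
        rw [tendsto_nhdsWithin_iff]
        exact ⟨hhc, hU.mono fun q hq => hmem q hq⟩
      have hfh : ContinuousAt (fun q => f (h q)) p :=
        Filter.Tendsto.comp (hfc (h p) (hmem p hp)) htd
      have hmain : ContinuousAt (fun q : E₂ × ℝ => (‖g q‖ / r) • f (h q)) p :=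
        (hgcont.norm.continuousAt.div continuousAt_const hr.ne').smul hfh
      apply hmain.congr
      apply hU.mono
      intro q hq
      show (‖g q‖ / r) • f (h q) = fr (g q)
      rw [hfr, if_neg hq, hh_def]
  constructor
  · -- continuity of φ
    have hφeq : φ = fun p : E₂ × ℝ => (p.2 / (p.2 ^ 2 + ε ^ 2)) • fr (g p) :=
      funext fun p => hφ' p
    rw [hφeq]
    apply Continuous.smul
    · exact continuous_snd.div ((continuous_snd.pow 2).add continuous_const)
        fun p => (hεpos p.2).ne'
    · exact hFcont
  · -- compactness
    intro A hA
    obtain ⟨C, hC⟩ := isBounded_iff_forall_norm_le.mp hA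
    set R := max C 0 with hR_def
    have hR0 : 0 ≤ R := le_max_right _ _
    have hR1 : ∀ p ∈ A, ‖p.1‖ ≤ R := fun p hp =>
      le_trans (norm_fst_le p) (le_trans (hC p hp) (le_max_left _ _))
    have hR2 : ∀ p ∈ A, |p.2| ≤ R := fun p hp =>
      le_trans (le_trans (Real.norm_eq_abs p.2 ▸ norm_snd_le p) (hC p hp)) (le_max_left _ _)
    set Cb := Ks * R + R * ‖c‖ with hCb_def
    have hCb0 : 0 ≤ Cb := by positivity
    have hub : ∀ p ∈ A, ‖u p‖ ≤ Cb := by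
      intro p hp
      rw [hu_def]
      calc ‖s p.1 + p.2 • c‖ ≤ ‖s p.1‖ + ‖p.2 • c‖ := norm_add_le _ _
        _ ≤ Ks * ‖p.1‖ + |p.2| * ‖c‖ := by
            rw [norm_smul, Real.norm_eq_abs]
            exact add_le_add (hsb' p.1) le_rfl
        _ ≤ Ks * R + R * ‖c‖ := by
            have h1 : Ks * ‖p.1‖ ≤ Ks * R :=
              mul_le_mul_of_nonneg_left (hR1 p hp) (abs_nonneg _)
            have h2 : |p.2| * ‖c‖ ≤ R * ‖c‖ :=
              mul_le_mul_of_nonneg_right (hR2 p hp) (norm_nonneg _)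
            linarith
    set M := Cb / r with hM_def
    suffices htb : TotallyBounded (φ '' A) by
      exact isCompact_iff_totallyBounded_isComplete.mpr
        ⟨htb.closure, isClosed_closure.isComplete⟩
    apply totallyBounded_of_near
    intro η hη
    set δ := η / (2 * (Kf + 1)) with hδ_def
    have hδ0 : 0 < δ := by positivity
    have hKfδ : Kf * δ ≤ η / 2 := by
      have h1 : δ * (2 * (Kf + 1)) = η := by
        rw [hδ_def]; exact div_mul_cancel₀ _ (by positivity)
      nlinarith [hδ0, hKf0]
    set Agood : Set (E₂ × ℝ) := {p | p ∈ A ∧ p.2 ≠ 0 ∧ δ < ‖u p‖} with hAg_def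
    set B := (fun p : E₂ × ℝ => (r / ‖g p‖) • g p) '' Agood with hB_def
    have hg0 : ∀ p ∈ Agood, g p ≠ 0 := by
      rintro p ⟨hpA, ht, hu⟩
      rw [← norm_pos_iff, hgn p]
      have : 0 < |p.2| := abs_pos.mpr ht
      nlinarith
    have hBs : B ⊆ sphere (0 : E₁) r ∩ a.domain := by
      rintro x ⟨p, hp, rfl⟩
      exact ⟨hsph _ (hg0 p hp), a.domain.smul_mem _ (hgdom p)⟩
    have hBb : IsBounded B :=
      isBounded_sphere.subset fun x hx => (hBs hx).1
    set A₂ := closedBall (0 : E₂) (r * R / δ) with hA₂_def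
    have hBA₂ : B ⊆ {x : E₁ | ∃ y ∈ A₂, (x, y) ∈ a.graph} := by
      rintro x ⟨p, hp, rfl⟩
      obtain ⟨hpA, ht, huδ⟩ := hp
      refine ⟨(r / ‖g p‖) • (p.2 • p.1), ?_, ?_⟩
      · rw [hA₂_def, mem_closedBall, dist_zero_right]
        have hgne := hg0 p ⟨hpA, ht, huδ⟩
        have hgpos : 0 < ‖g p‖ := norm_pos_iff.mpr hgne
        have htpos : 0 < |p.2| := abs_pos.mpr ht
        have hupos : 0 < ‖u p‖ := lt_trans hδ0 huδ
        simp only [norm_smul, Real.norm_eq_abs]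
        rw [abs_of_nonneg (by positivity : (0:ℝ) ≤ r / ‖g p‖), hgn p]
        have heq : r / (|p.2| * ‖u p‖) * (|p.2| * ‖p.1‖) = r * ‖p.1‖ / ‖u p‖ := by
          field_simp
        rw [heq]
        apply div_le_div₀ (by positivity) _ hδ0 (le_of_lt huδ)
        exact mul_le_mul_of_nonneg_left (hR1 p hpA) (le_of_lt hr)
      · exact a.graph.smul_mem _ (hggraph p)
    have hBcap : B ∩ {x : E₁ | ∃ y ∈ A₂, (x, y) ∈ a.graph} = B :=
      Set.inter_eq_self_of_subset_left hBA₂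
    have hCcomp : IsCompact (closure (f '' B)) := by
      have h0 := hfcomp B A₂ hBb isBounded_closedBall hBs
      rwa [hBcap] at h0
    set T := ((fun q : ℝ × E₂ => q.1 • q.2) '' (Set.Icc (-M) M ×ˢ closure (f '' B))) ∪ {0}
      with hT_def
    have hTc : IsCompact T :=
      ((isCompact_Icc.prod hCcomp).image (continuous_fst.smul continuous_snd)).union
        isCompact_singleton
    refine ⟨T, hTc.totallyBounded, ?_⟩
    rintro z ⟨p, hpA, rfl⟩
    by_cases ht : p.2 = 0
    · refine ⟨0, Set.mem_union_right _ rfl, ?_⟩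
      rw [hφ' p, ht]
      simp
      linarith
    by_cases huδ : ‖u p‖ ≤ δ
    · refine ⟨0, Set.mem_union_right _ rfl, ?_⟩
      rw [dist_zero_right, hφ' p]
      have h1 : ‖(p.2 / (p.2 ^ 2 + ε ^ 2)) • fr (g p)‖
          = |p.2| / (p.2 ^ 2 + ε ^ 2) * ‖fr (g p)‖ := by
        rw [norm_smul, Real.norm_eq_abs, abs_div, abs_of_pos (hεpos p.2)]
      rw [h1]
      have h2 : ‖fr (g p)‖ ≤ Kf * (|p.2| * ‖u p‖) := by
        have := hfrb (g p); rwa [hgn p] at this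
      have h3 : |p.2| / (p.2 ^ 2 + ε ^ 2) * ‖fr (g p)‖
          ≤ |p.2| / (p.2 ^ 2 + ε ^ 2) * (Kf * (|p.2| * ‖u p‖)) :=
        mul_le_mul_of_nonneg_left h2 (by positivity)
      have habs2 : |p.2| * |p.2| = p.2 ^ 2 := by rw [abs_mul_abs_self, ← pow_two]
      have h4 : |p.2| / (p.2 ^ 2 + ε ^ 2) * (Kf * (|p.2| * ‖u p‖))
          = Kf * ‖u p‖ * (p.2 ^ 2 / (p.2 ^ 2 + ε ^ 2)) := by
        rw [← habs2]; ring
      have h5 : p.2 ^ 2 / (p.2 ^ 2 + ε ^ 2) ≤ 1 := by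
        rw [div_le_one (hεpos p.2)]; nlinarith [sq_nonneg ε]
      have h6 : Kf * ‖u p‖ * (p.2 ^ 2 / (p.2 ^ 2 + ε ^ 2)) ≤ Kf * δ * 1 := by
        apply mul_le_mul _ h5 (by positivity) (by positivity)
        exact mul_le_mul_of_nonneg_left huδ hKf0
      calc |p.2| / (p.2 ^ 2 + ε ^ 2) * ‖fr (g p)‖
          ≤ Kf * ‖u p‖ * (p.2 ^ 2 / (p.2 ^ 2 + ε ^ 2)) := by rw [← h4]; exact h3
        _ ≤ Kf * δ * 1 := h6
        _ ≤ η := by rw [mul_one]; linarith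
    · push_neg at huδ
      have hpg : p ∈ Agood := ⟨hpA, ht, huδ⟩
      have hgne := hg0 p hpg
      have hgpos : 0 < ‖g p‖ := norm_pos_iff.mpr hgne
      refine ⟨φ p, Or.inl ?_, by rw [dist_self]; linarith⟩
      refine ⟨(p.2 / (p.2 ^ 2 + ε ^ 2) * (‖g p‖ / r), f ((r / ‖g p‖) • g p)), ⟨?_, ?_⟩, ?_⟩
      · rw [Set.mem_Icc, ← abs_le]
        have htpos : 0 < |p.2| := abs_pos.mpr ht
        have hupos : 0 < ‖u p‖ := lt_trans hδ0 huδ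
        have habs : |p.2 / (p.2 ^ 2 + ε ^ 2) * (‖g p‖ / r)|
            = |p.2| / (p.2 ^ 2 + ε ^ 2) * (‖g p‖ / r) := by
          rw [abs_mul, abs_div, abs_of_pos (hεpos p.2), abs_of_pos (div_pos hgpos hr)]
        rw [habs, hgn p]
        have habs2 : |p.2| * |p.2| = p.2 ^ 2 := by rw [abs_mul_abs_self, ← pow_two]
        have heq : |p.2| / (p.2 ^ 2 + ε ^ 2) * (|p.2| * ‖u p‖ / r)
            = ‖u p‖ / r * (p.2 ^ 2 / (p.2 ^ 2 + ε ^ 2)) := by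
          rw [← habs2]; ring
        rw [heq]
        have h5 : p.2 ^ 2 / (p.2 ^ 2 + ε ^ 2) ≤ 1 := by
          rw [div_le_one (hεpos p.2)]; nlinarith [sq_nonneg ε]
        calc ‖u p‖ / r * (p.2 ^ 2 / (p.2 ^ 2 + ε ^ 2)) ≤ ‖u p‖ / r * 1 :=
              mul_le_mul_of_nonneg_left h5 (by positivity)
          _ = ‖u p‖ / r := mul_one _
          _ ≤ Cb / r := by gcongr; exact hub p hpA
          _ = M := hM_def.symm
      · exact subset_closure ⟨(r / ‖g p‖) • g p, ⟨p, hpg, rfl⟩, rfl⟩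
      · show ((p.2 / (p.2 ^ 2 + ε ^ 2)) * (‖g p‖ / r)) • f ((r / ‖g p‖) • g p) = φ p
        rw [hφ' p, hfr, if_neg hgne, mul_smul]
end

section
/- Suppose (y_ε, t_ε) ∈ E₂ ⊕ ℝ satisfies ‖y_ε‖² + t_ε² = 1 and (t_ε/(t_ε² + ε²))·f_r(t_ε s(y_ε) + t_ε² c̄) = y_ε with t_ε ≠ 0. Then the vector x_ε := r·t_ε·(s(y_ε) + t_ε c̄) / (|t_ε|·‖s(y_ε) + t_ε c̄‖) lies on the sphere S_r(0) and satisfies f(x_ε) = ((t_ε² + ε²)/t_ε²)·â x_ε. -/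
open scoped Classical

/-- If `(y_ε, t_ε)` satisfies `‖y_ε‖² + t_ε² = 1` and
`(t_ε/(t_ε²+ε²)) • f_r (t_ε • s y_ε + t_ε² • c̄) = y_ε` with `t_ε ≠ 0`, then
`x_ε := (r t_ε/(|t_ε| ‖s y_ε + t_ε c̄‖)) • (s y_ε + t_ε • c̄)` lies on the sphere `S_r(0)`
and satisfies `f x_ε = ((t_ε²+ε²)/t_ε²) • â x_ε`. -/
theorem fixed_point_gives_sphere_solution
    {E₁ E₂ : Type*} [NormedAddCommGroup E₁] [NormedSpace ℝ E₁] [CompleteSpace E₁]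
    [NormedAddCommGroup E₂] [NormedSpace ℝ E₂] [CompleteSpace E₂]
    (a : E₁ →ₗ.[ℝ] E₂)
    (r ε t : ℝ) (hr : 0 < r) (hε : ε ≠ 0) (ht : t ≠ 0)
    (f fr : E₁ → E₂)
    (hfr : ∀ x : E₁, fr x = if x = 0 then 0 else (‖x‖ / r) • f ((r / ‖x‖) • x))
    (s : E₂ → E₁) (hsec : ∀ y' : E₂, (s y', y') ∈ a.graph)
    (c : E₁) (hc : (c, (0 : E₂)) ∈ a.graph) (hcne : c ≠ 0)
    (y : E₂) (hyt : ‖y‖ ^ 2 + t ^ 2 = 1)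
    (hne : s y + t • c ≠ 0)
    (heq : (t / (t ^ 2 + ε ^ 2)) • fr (t • s y + t ^ 2 • c) = y)
    (x : E₁) (hx : x = ((r * t) / (|t| * ‖s y + t • c‖)) • (s y + t • c)) :
    ‖x‖ = r ∧
    ∃ hxd : x ∈ a.domain, f x = ((t ^ 2 + ε ^ 2) / t ^ 2) • a ⟨x, hxd⟩ := by
  set v := s y + t • c with hv
  have hvnorm : ‖v‖ ≠ 0 := norm_ne_zero_iff.mpr hne
  have hvpos : 0 < ‖v‖ := norm_pos_iff.mpr hne
  have htabs : |t| ≠ 0 := abs_ne_zero.mpr ht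
  have hte : t ^ 2 + ε ^ 2 ≠ 0 := by positivity
  -- norm of x
  have hnx : ‖x‖ = r := by
    rw [hx, norm_smul, Real.norm_eq_abs, abs_div, abs_mul, abs_mul, abs_abs, abs_norm,
      abs_of_pos hr]
    field_simp
  refine ⟨hnx, ?_⟩
  -- domain membership and value of a
  obtain ⟨ys, hys1, hys2⟩ := (a.mem_graph_iff).mp (hsec y)
  obtain ⟨yc, hyc1, hyc2⟩ := (a.mem_graph_iff).mp hc
  have hsyd : s y ∈ a.domain := by have := ys.2; rwa [hys1] at this
  have hcd : c ∈ a.domain := by have := yc.2; rwa [hyc1] at this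
  set c1 : ℝ := (r * t) / (|t| * ‖v‖) with hc1
  have hc1ne : c1 ≠ 0 := by
    apply div_ne_zero (by positivity)
    exact mul_ne_zero htabs hvnorm
  have hxd : x ∈ a.domain := by
    rw [hx]
    exact Submodule.smul_mem _ _ (Submodule.add_mem _ (hsyd) (Submodule.smul_mem _ _ (hcd)))
  refine ⟨hxd, ?_⟩
  -- compute a x
  have hvd : v ∈ a.domain := Submodule.add_mem _ hsyd (Submodule.smul_mem _ _ hcd)
  have hax : a ⟨x, hxd⟩ = c1 • y := by
    have h1 : a ⟨x, hxd⟩ = c1 • a ⟨v, hvd⟩ := by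
      rw [← a.map_smul]
      congr 1
      exact Subtype.ext (by simp [hx])
    rw [h1]
    congr 1
    have h2 : a ⟨v, hvd⟩ = a ys + t • a yc := by
      rw [← a.map_smul, ← a.map_add]
      congr 1
      apply Subtype.ext
      simp [hv, hys1, hyc1]
    rw [h2, hys2, hyc2, smul_zero, add_zero]
  -- rewrite heq to get f x
  have hw : t • s y + t ^ 2 • c = t • v := by
    rw [hv, smul_add, smul_smul, sq]
  have hwne : t • v ≠ 0 := smul_ne_zero ht hne
  have hwnorm : ‖t • v‖ = |t| * ‖v‖ := by rw [norm_smul, Real.norm_eq_abs]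
  have hxw : (r / (|t| * ‖v‖)) • (t • v) = x := by
    rw [hx, smul_smul, hc1]
    congr 1
    field_simp
  have heq2 : (t / (t ^ 2 + ε ^ 2)) • ((|t| * ‖v‖ / r) • f x) = y := by
    rw [← heq, hw, hfr (t • v), if_neg hwne, hwnorm, hxw]
  have hk : ((t / (t ^ 2 + ε ^ 2)) * (|t| * ‖v‖ / r)) • f x = y := by
    rw [mul_smul]; exact heq2
  have hkne : (t / (t ^ 2 + ε ^ 2)) * (|t| * ‖v‖ / r) ≠ 0 := by
    apply mul_ne_zero (div_ne_zero ht hte)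
    exact div_ne_zero (mul_ne_zero htabs hvnorm) hr.ne'
  have hfx : f x = ((t / (t ^ 2 + ε ^ 2)) * (|t| * ‖v‖ / r))⁻¹ • y := by
    rw [← hk, smul_smul, inv_mul_cancel₀ hkne, one_smul]
  rw [hfx, hax, smul_smul]
  congr 1
  rw [hc1]
  field_simp
end
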